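/- For every algebra homomorphism η from U⁺ to ℂ one has η(E₁)·η(E₂) = 0 and η(E₃) = (1 − q⁻¹)·η(E₁)·η(E₂). In particular there is no algebra homomorphism η: U⁺ → ℂ with both η(E₁) ≠ 0 and η(E₂) ≠ 0 (no non-singular Whittaker function exists for U_q(sl₃)). -/

import Mathlib

/-!
Formalization of Whittaker modules for the quantum group `U_q(sl₃)`.

Generator indices in the free algebra on `Fin 8`:
`0 = E₁`, `1 = E₂`, `2 = F₁`, `3 = F₂`, `4 = K₁`, `5 = K₁⁻¹`, `6 = K₂`, `7 = K₂⁻¹`.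
-/

noncomputable section
open scoped BigOperators

namespace UqSl3

def X (i : Fin 8) : FreeAlgebra ℂ (Fin 8) := FreeAlgebra.ι ℂ i

/-- The defining relations of `U_q(sl₃)` (Jimbo presentation). -/
inductive rel (q : ℂ) : FreeAlgebra ℂ (Fin 8) → FreeAlgebra ℂ (Fin 8) → Prop
  | K1K1i : rel q (X 4 * X 5) 1
  | K1iK1 : rel q (X 5 * X 4) 1
  | K2K2i : rel q (X 6 * X 7) 1
  | K2iK2 : rel q (X 7 * X 6) 1
  | Kcomm (i j : Fin 8) (hi : 4 ≤ i) (hj : 4 ≤ j) : rel q (X i * X j) (X j * X i)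
  | E1F1 : rel q (X 0 * X 2) (X 2 * X 0 + (q - q⁻¹)⁻¹ • (X 4 - X 5))
  | E2F2 : rel q (X 1 * X 3) (X 3 * X 1 + (q - q⁻¹)⁻¹ • (X 6 - X 7))
  | E1F2 : rel q (X 0 * X 3) (X 3 * X 0)
  | E2F1 : rel q (X 1 * X 2) (X 2 * X 1)
  | K1E1 : rel q (X 4 * X 0) ((q ^ 2 : ℂ) • (X 0 * X 4))
  | K1E2 : rel q (X 4 * X 1) (q⁻¹ • (X 1 * X 4))
  | K2E1 : rel q (X 6 * X 0) (q⁻¹ • (X 0 * X 6))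
  | K2E2 : rel q (X 6 * X 1) ((q ^ 2 : ℂ) • (X 1 * X 6))
  | K1F1 : rel q (X 4 * X 2) (((q ^ 2)⁻¹ : ℂ) • (X 2 * X 4))
  | K1F2 : rel q (X 4 * X 3) (q • (X 3 * X 4))
  | K2F1 : rel q (X 6 * X 2) (q • (X 2 * X 6))
  | K2F2 : rel q (X 6 * X 3) (((q ^ 2)⁻¹ : ℂ) • (X 3 * X 6))
  | serreE1 : rel q (X 0 ^ 2 * X 1 + X 1 * X 0 ^ 2) ((q + q⁻¹) • (X 0 * X 1 * X 0))
  | serreE2 : rel q (X 1 ^ 2 * X 0 + X 0 * X 1 ^ 2) ((q + q⁻¹) • (X 1 * X 0 * X 1))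
  | serreF1 : rel q (X 2 ^ 2 * X 3 + X 3 * X 2 ^ 2) ((q + q⁻¹) • (X 2 * X 3 * X 2))
  | serreF2 : rel q (X 3 ^ 2 * X 2 + X 2 * X 3 ^ 2) ((q + q⁻¹) • (X 3 * X 2 * X 3))

/-- The quantum group `U = U_q(sl₃)`. -/
abbrev Uq (q : ℂ) := RingQuot (rel q)

variable (q α : ℂ)

def mkU : FreeAlgebra ℂ (Fin 8) →ₐ[ℂ] Uq q := RingQuot.mkAlgHom ℂ (rel q)

def E₁ : Uq q := mkU q (X 0)
def E₂ : Uq q := mkU q (X 1)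
def F₁ : Uq q := mkU q (X 2)
def F₂ : Uq q := mkU q (X 3)
def K₁ : Uq q := mkU q (X 4)
def K₁i : Uq q := mkU q (X 5)
def K₂ : Uq q := mkU q (X 6)
def K₂i : Uq q := mkU q (X 7)

lemma rel_eq {a b : FreeAlgebra ℂ (Fin 8)} (h : rel q a b) : mkU q a = mkU q b :=
  RingQuot.mkAlgHom_rel ℂ h

lemma K1_mul_K1i : K₁ q * K₁i q = 1 := by
  simpa [K₁, K₁i, map_mul, map_one] using rel_eq q rel.K1K1i
lemma K1i_mul_K1 : K₁i q * K₁ q = 1 := by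
  simpa [K₁, K₁i, map_mul, map_one] using rel_eq q rel.K1iK1
lemma K2_mul_K2i : K₂ q * K₂i q = 1 := by
  simpa [K₂, K₂i, map_mul, map_one] using rel_eq q rel.K2K2i
lemma K2i_mul_K2 : K₂i q * K₂ q = 1 := by
  simpa [K₂, K₂i, map_mul, map_one] using rel_eq q rel.K2iK2

/-- `K₁` as a unit. -/
def K₁u : (Uq q)ˣ := ⟨K₁ q, K₁i q, K1_mul_K1i q, K1i_mul_K1 q⟩
/-- `K₂` as a unit. -/
def K₂u : (Uq q)ˣ := ⟨K₂ q, K₂i q, K2_mul_K2i q, K2i_mul_K2 q⟩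
/-- `K = K₁K₂²` as a unit. -/
def Ku : (Uq q)ˣ := K₁u q * K₂u q ^ 2

/-- Integer powers `K₂^l`. -/
def K2z (l : ℤ) : Uq q := ((K₂u q ^ l : (Uq q)ˣ) : Uq q)
/-- Integer powers `K^p`, where `K = K₁K₂²`. -/
def Kz (p : ℤ) : Uq q := ((Ku q ^ p : (Uq q)ˣ) : Uq q)

/-- `E₃ = E₁E₂ - q⁻¹E₂E₁`. -/
def E₃ : Uq q := E₁ q * E₂ q - q⁻¹ • (E₂ q * E₁ q)
/-- `F₃ = F₁F₂ - qF₂F₁`. -/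
def F₃ : Uq q := F₁ q * F₂ q - q • (F₂ q * F₁ q)
/-- The Casimir element `C₁ = F₁E₁ + (qK₁ + q⁻¹K₁⁻¹)/(q - q⁻¹)²`. -/
def C₁ : Uq q := F₁ q * E₁ q + ((q - q⁻¹) ^ 2)⁻¹ • (q • K₁ q + q⁻¹ • K₁i q)

/-- The quantum integer `[k] = (q^k - q^{-k})/(q - q⁻¹)`. -/
def qint (k : ℤ) : ℂ := (q ^ k - q ^ (-k)) / (q - q⁻¹)
/-- The quantum factorial `[k]!`. -/
def qfact : ℕ → ℂ
  | 0 => 1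
  | n + 1 => qint q ((n : ℤ) + 1) * qfact n
/-- The quantum binomial coefficient (defined to be `0` when `k > m`). -/
def qbinom (m k : ℕ) : ℂ := if k ≤ m then qfact q m / (qfact q k * qfact q (m - k)) else 0

/-- `[K₂; m] = (q^m K₂ - q^{-m} K₂⁻¹)/(q - q⁻¹)`. -/
def brK2 (m : ℤ) : Uq q := (q - q⁻¹)⁻¹ • ((q ^ m) • K₂ q - (q ^ (-m)) • K₂i q)

/-- The subalgebra `U⁺` generated by `E₁, E₂`. -/
def Uplus : Subalgebra ℂ (Uq q) := Algebra.adjoin ℂ {E₁ q, E₂ q}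
lemma E1_mem_Uplus : E₁ q ∈ Uplus q := Algebra.subset_adjoin (by simp)
lemma E2_mem_Uplus : E₂ q ∈ Uplus q := Algebra.subset_adjoin (by simp)
lemma E3_mem_Uplus : E₃ q ∈ Uplus q :=
  sub_mem (mul_mem (E1_mem_Uplus q) (E2_mem_Uplus q))
    (Subalgebra.smul_mem _ (mul_mem (E2_mem_Uplus q) (E1_mem_Uplus q)) _)

/-- The commutative subalgebra `ℂ[K^{±1}, C₁]` of `U`. -/
def Acal : Subalgebra ℂ (Uq q) := Algebra.adjoin ℂ {Kz q 1, Kz q (-1), C₁ q}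
lemma K_mem_Acal : Kz q 1 ∈ Acal q := Algebra.subset_adjoin (by simp)
lemma Ki_mem_Acal : Kz q (-1) ∈ Acal q := Algebra.subset_adjoin (by simp)
lemma C1_mem_Acal : C₁ q ∈ Acal q := Algebra.subset_adjoin (by simp)

/-- `K` as an element of `ℂ[K^{±1}, C₁]`. -/
def KA : Acal q := ⟨Kz q 1, K_mem_Acal q⟩
/-- `C₁` as an element of `ℂ[K^{±1}, C₁]`. -/
def C1A : Acal q := ⟨C₁ q, C1_mem_Acal q⟩

/-- The critical polynomial `h_n(K, C₁) = q^{3-2n}K + q^{2n-3}K⁻¹ - (q - q⁻¹)²C₁`. -/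
def hn (n : ℕ) : Uq q :=
  q ^ (3 - 2 * (n : ℤ)) • Kz q 1 + q ^ (2 * (n : ℤ) - 3) • Kz q (-1) - ((q - q⁻¹) ^ 2) • C₁ q
lemma hn_mem_Acal (n : ℕ) : hn q n ∈ Acal q :=
  sub_mem (add_mem (Subalgebra.smul_mem _ (K_mem_Acal q) _)
      (Subalgebra.smul_mem _ (Ki_mem_Acal q) _))
    (Subalgebra.smul_mem _ (C1_mem_Acal q) _)
/-- `h_n(K, C₁)` as an element of `ℂ[K^{±1}, C₁]`. -/
def hnA (n : ℕ) : Acal q := ⟨hn q n, hn_mem_Acal q n⟩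

/-- The left ideal `U(E₁ - α) + UE₂`. -/
def lId : Submodule (Uq q) (Uq q) :=
  Submodule.span (Uq q) {E₁ q - algebraMap ℂ (Uq q) α, E₂ q}
/-- The universal Whittaker module `M(η) = U/(U(E₁ - α) + UE₂)`. -/
abbrev Mmod := Uq q ⧸ lId q α
/-- The canonical Whittaker generator `v_η` of `M(η)`. -/
def vη : Mmod q α := Submodule.Quotient.mk 1

/-- The submodule `W(η, I) = U·I·v_η` of `M(η)`. -/
def Wmod (I : Ideal (Acal q)) : Submodule (Uq q) (Mmod q α) :=
  Submodule.span (Uq q) ((fun Q : Acal q => (Q : Uq q) • vη q α) '' (I : Set (Acal q)))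

/-- The maximal ideal `J(κ, c)` of `ℂ[K^{±1}, C₁]` generated by `K - κ` and `C₁ - c`. -/
def Jid (κ c : ℂ) : Ideal (Acal q) :=
  Ideal.span {KA q - algebraMap ℂ (Acal q) κ, C1A q - algebraMap ℂ (Acal q) c}
/-- `W(η; κ, c) = W(η, J(κ, c))`. -/
def WmodJ (κ c : ℂ) : Submodule (Uq q) (Mmod q α) := Wmod q α (Jid q κ c)
/-- `V(η; κ, c) = M(η)/W(η; κ, c)`. -/
abbrev Vmod (κ c : ℂ) := Mmod q α ⧸ WmodJ q α κ c

/-- The coefficients `a_{kj}(n)`. -/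
def akj (n k j : ℕ) : ℂ :=
  (-1) ^ j * α ^ k * (q ^ 2 - 1) ^ k * q ^ ((j : ℤ) * ((n : ℤ) - 3)) *
    q ^ (((k : ℤ) * (2 * (n : ℤ) + 2 * (j : ℤ) + (k : ℤ) - 7)) / 2) *
    qbinom q n k * qbinom q (n - k) j

/-- The element `u(n, l, Q) ∈ M(η)`. -/
def uElt (n : ℕ) (l : ℤ) (Q : Uq q) : Mmod q α :=
  q ^ (2 * (n : ℤ) * l) •
    ((K2z q l *
        (∑ k ∈ Finset.range (n + 1), ∑ j ∈ Finset.range (n - k + 1),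
          akj q α n k j •
            (F₂ q ^ (n - k) * F₃ q ^ k * K2z q (2 * (j : ℤ)) *
              Kz q (-(2 * (j : ℤ) + (k : ℤ))))) * Q) • vη q α)

/-- The value `h_n(κ, c) = q^{3-2n}κ + q^{2n-3}κ⁻¹ - (q - q⁻¹)²c`. -/
def hval (n : ℕ) (κ c : ℂ) : ℂ :=
  q ^ (3 - 2 * (n : ℤ)) * κ + q ^ (2 * (n : ℤ) - 3) * κ⁻¹ - (q - q⁻¹) ^ 2 * c
/-- A pair `(κ, c)` is critical if `h_n(κ, c) = 0` for some positive integer `n`. -/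
def Critical (κ c : ℂ) : Prop := ∃ n : ℕ, 0 < n ∧ hval q n κ c = 0

/-- The set `Î_n = {Q : h_n(K, C₁)Q ∈ I}`. -/
def hatI (I : Ideal (Acal q)) (n : ℕ) : Set (Acal q) := {Q | hnA q n * Q ∈ I}
/-- An ideal `I` is non-critical if `Î_n = I` for all positive `n`. -/
def NonCriticalIdeal (I : Ideal (Acal q)) : Prop :=
  ∀ n : ℕ, 0 < n → hatI q I n = (I : Set (Acal q))

end UqSl3


open UqSl3 in
lemma UqSl3.prod_zero (q : ℂ) (hq0 : q ≠ 0) (hq1 : q ≠ 1)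
    (η : Uplus q →ₐ[ℂ] ℂ) :
    η ⟨E₁ q, E1_mem_Uplus q⟩ * η ⟨E₂ q, E2_mem_Uplus q⟩ = 0 := by
  set e1 : Uplus q := ⟨E₁ q, E1_mem_Uplus q⟩ with he1
  set e2 : Uplus q := ⟨E₂ q, E2_mem_Uplus q⟩ with he2
  have hserre : e1 ^ 2 * e2 + e2 * e1 ^ 2 = (q + q⁻¹) • (e1 * e2 * e1) := by
    apply Subtype.ext
    have h := rel_eq q (rel.serreE1 (q := q))
    simp only [map_add, map_mul, map_pow, map_smul] at h
    simpa [he1, he2, E₁, E₂] using h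
  have key := congrArg η hserre
  simp only [map_add, map_mul, map_pow, map_smul, smul_eq_mul] at key
  set a := η e1 with ha
  set b := η e2 with hb
  have h2 : (2 - (q + q⁻¹)) * (a ^ 2 * b) = 0 := by linear_combination key
  have hcoef : (2 - (q + q⁻¹)) ≠ 0 := by
    intro h
    apply hq1
    have hqq : q * q⁻¹ = 1 := mul_inv_cancel₀ hq0
    have hsq : (q - 1) ^ 2 = 0 := by linear_combination (-q) * h - hqq
    have h0 : q - 1 = 0 := sq_eq_zero_iff.mp (by rw [sq]; linear_combination hsq)
    exact sub_eq_zero.mp h0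
  have hab2 : a ^ 2 * b = 0 := (mul_eq_zero.mp h2).resolve_left hcoef
  have : a * (a * b) = 0 := by linear_combination hab2
  rcases mul_eq_zero.mp this with h | h
  · simp [h]
  · exact h


open UqSl3 in
/-- For every algebra homomorphism `η : U⁺ → ℂ` one has `η(E₁)η(E₂) = 0` and
`η(E₃) = (1 - q⁻¹)η(E₁)η(E₂)`; in particular there is no non-singular Whittaker function. -/
theorem statement0 (q : ℂ) (hq0 : q ≠ 0) (hq : ∀ n : ℕ, n ≠ 0 → q ^ n ≠ 1)
    (η : Uplus q →ₐ[ℂ] ℂ) :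
    η ⟨E₁ q, E1_mem_Uplus q⟩ * η ⟨E₂ q, E2_mem_Uplus q⟩ = 0 ∧
    η ⟨E₃ q, E3_mem_Uplus q⟩ =
      (1 - q⁻¹) * (η ⟨E₁ q, E1_mem_Uplus q⟩ * η ⟨E₂ q, E2_mem_Uplus q⟩) ∧
    ¬ ∃ η' : Uplus q →ₐ[ℂ] ℂ,
        η' ⟨E₁ q, E1_mem_Uplus q⟩ ≠ 0 ∧ η' ⟨E₂ q, E2_mem_Uplus q⟩ ≠ 0 := by

  have hq1 : q ≠ 1 := by simpa using hq 1 one_ne_zero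
  have hab := UqSl3.prod_zero q hq0 hq1 η
  refine ⟨hab, ?_, ?_⟩
  · have hE3 : (⟨E₃ q, E3_mem_Uplus q⟩ : Uplus q) +
        q⁻¹ • ((⟨E₂ q, E2_mem_Uplus q⟩ : Uplus q) * ⟨E₁ q, E1_mem_Uplus q⟩) =
        (⟨E₁ q, E1_mem_Uplus q⟩ : Uplus q) * ⟨E₂ q, E2_mem_Uplus q⟩ := by
      apply Subtype.ext
      show E₃ q + q⁻¹ • (E₂ q * E₁ q) = E₁ q * E₂ q
      rw [E₃, sub_add_cancel]
    have h := congrArg η hE3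
    simp only [map_add, map_smul, map_mul, smul_eq_mul] at h
    linear_combination h
  · rintro ⟨η', h1', h2'⟩
    have := UqSl3.prod_zero q hq0 hq1 η'
    rcases mul_eq_zero.mp this with h | h
    · exact h1' h
    · exact h2' h
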